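/- Let (S,∘) be an RC-quasigroup and M its structure monoid. Then: (1) there is a length function on M, i.e., a monoid homomorphism λ : M → ℕ with λ(g) ≥ 1 for g ≠ 1 and λ(s) = 1 for each generator s in S; (2) M is left-cancellative; (3) any two elements of M admit a (unique) least common right-multiple and a (unique) greatest common left-divisor with respect to the left-divisibility relation; moreover, for distinct s,t in S, the right-lcm of s and t in M is s·(s∘t). -/

import Mathlib

/-- The right-cyclic law: `(x∘y)∘(x∘z) = (y∘x)∘(y∘z)`. -/
def RCLaw {S : Type*} (op : S → S → S) : Prop :=
  ∀ x y z : S, op (op x y) (op x z) = op (op y x) (op y z)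

/-- The defining relations `s(s∘t) = t(t∘s)`, `s ≠ t`, of the structure monoid, as a relation
on the free monoid over `S`. -/
def rcRel {S : Type*} (op : S → S → S) : FreeMonoid S → FreeMonoid S → Prop :=
  fun a b => ∃ s t : S, s ≠ t ∧
    a = FreeMonoid.of s * FreeMonoid.of (op s t) ∧ b = FreeMonoid.of t * FreeMonoid.of (op t s)

/-- The structure monoid of `(S,∘)`: the monoid presented by generators `S` and relations
`s(s∘t) = t(t∘s)` for `s ≠ t`, realized as the quotient of the free monoid on `S` by the
congruence generated by these relations. -/
abbrev StructureMonoid {S : Type*} (op : S → S → S) := (conGen (rcRel op)).Quotient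

/-- The canonical generator of the structure monoid associated with `s ∈ S`. -/
def smGen {S : Type*} (op : S → S → S) (s : S) : StructureMonoid op :=
  (conGen (rcRel op)).mk' (FreeMonoid.of s)

namespace RCProof

open Finsupp

variable {S : Type*} (op : S → S → S)

section Defs

variable (hlb : ∀ s : S, Function.Bijective (op s))

/-- The inverse of the left translation `t ↦ s ∘ t`, as a permutation of `S`. -/
noncomputable def sig (s : S) : Equiv.Perm S := (Equiv.ofBijective (op s) (hlb s)).symm

lemma sig_symm_apply (s t : S) : (sig op hlb s).symm t = op s t := rfl

lemma sig_op (s t : S) : sig op hlb s (op s t) = t :=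
  (Equiv.ofBijective (op s) (hlb s)).symm_apply_apply t

lemma sig_mul (hRC : RCLaw op) (s t : S) :
    sig op hlb s * sig op hlb (op s t) = sig op hlb t * sig op hlb (op t s) := by
  have key : ∀ a b z : S, ((sig op hlb a * sig op hlb (op a b))⁻¹ : Equiv.Perm S) z
      = op (op a b) (op a z) := by
    intro a b z
    rw [mul_inv_rev, Equiv.Perm.mul_apply]
    rfl
  apply inv_injective
  ext z
  rw [key, key]
  exact hRC s t z

variable (hRC : RCLaw op)

/-- The letter-wise "affine" action on `S →₀ ℕ`. -/
noncomputable def phiAux (s : S) : Function.End (S →₀ ℕ) :=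
  fun x => Finsupp.single s 1 + equivMapDomain (sig op hlb s) x

/-- The lift of `phiAux` to the free monoid. -/
noncomputable def phiWord : FreeMonoid S →* Function.End (S →₀ ℕ) :=
  FreeMonoid.lift (phiAux op hlb)

lemma phiWord_pair (s t : S) (x : S →₀ ℕ) :
    phiWord op hlb (FreeMonoid.of s * FreeMonoid.of (op s t)) x
      = (Finsupp.single s 1 + Finsupp.single t 1)
        + equivMapDomain (sig op hlb s * sig op hlb (op s t)) x := by
  have h1 : phiWord op hlb (FreeMonoid.of s * FreeMonoid.of (op s t)) x
      = phiAux op hlb s (phiAux op hlb (op s t) x) := by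
    rw [map_mul]
    rfl
  rw [h1]
  show Finsupp.single s 1 + equivMapDomain (sig op hlb s)
      (Finsupp.single (op s t) 1 + equivMapDomain (sig op hlb (op s t)) x) = _
  have hadd : ∀ (e : Equiv.Perm S) (a b : S →₀ ℕ),
      equivMapDomain (e : S ≃ S) (a + b) = equivMapDomain e a + equivMapDomain e b := by
    intro e a b; ext u; simp [equivMapDomain_apply]
  rw [hadd, equivMapDomain_single, sig_op, ← equivMapDomain_trans]
  have : ((sig op hlb (op s t)).trans (sig op hlb s) : S ≃ S)
      = ((sig op hlb s * sig op hlb (op s t) : Equiv.Perm S) : S ≃ S) := rfl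
  rw [this, ← add_assoc]

lemma phiWord_rel (hRC : RCLaw op) {a b : FreeMonoid S} (h : rcRel op a b) :
    phiWord op hlb a = phiWord op hlb b := by
  obtain ⟨s, t, hst, ha, hb⟩ := h
  subst ha hb
  funext x
  rw [phiWord_pair, phiWord_pair, sig_mul op hlb hRC s t, add_comm (Finsupp.single s 1)]

/-- The action of the structure monoid on `S →₀ ℕ`. -/
noncomputable def Phi : StructureMonoid op →* Function.End (S →₀ ℕ) :=
  (conGen (rcRel op)).lift (phiWord op hlb)
    (Con.conGen_le.2 fun a b h => (Con.ker_rel _).2 (phiWord_rel op hlb hRC h))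

/-- The permutation homomorphism. -/
noncomputable def rho : StructureMonoid op →* Equiv.Perm S :=
  (conGen (rcRel op)).lift (FreeMonoid.lift (sig op hlb))
    (Con.conGen_le.2 fun a b h => (Con.ker_rel _).2 (by
      obtain ⟨s, t, hst, ha, hb⟩ := h
      subst ha hb
      rw [map_mul, map_mul, FreeMonoid.lift_eval_of, FreeMonoid.lift_eval_of,
        FreeMonoid.lift_eval_of, FreeMonoid.lift_eval_of]
      exact sig_mul op hlb hRC s t))

/-- The bijective 1-cocycle. -/
noncomputable def ev (m : StructureMonoid op) : S →₀ ℕ := Phi op hlb hRC m 0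

lemma Phi_mk (w : FreeMonoid S) :
    Phi op hlb hRC ((conGen (rcRel op)).mk' w) = phiWord op hlb w :=
  Con.lift_mk' _ _

lemma rho_mk (w : FreeMonoid S) :
    rho op hlb hRC ((conGen (rcRel op)).mk' w) = FreeMonoid.lift (sig op hlb) w :=
  Con.lift_mk' _ _

lemma ev_one : ev op hlb hRC 1 = 0 := by
  show Phi op hlb hRC 1 0 = 0
  rw [map_one]
  rfl

lemma rho_smGen (s : S) : rho op hlb hRC (smGen op s) = sig op hlb s := by
  rw [smGen, rho_mk, FreeMonoid.lift_eval_of]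

lemma ev_smGen (s : S) : ev op hlb hRC (smGen op s) = Finsupp.single s 1 := by
  show Phi op hlb hRC (smGen op s) 0 = _
  rw [smGen, Phi_mk]
  show phiAux op hlb s 0 = _
  rw [phiAux]
  simp

lemma eqMD_add (e : S ≃ S) (a b : S →₀ ℕ) :
    equivMapDomain e (a + b) = equivMapDomain e a + equivMapDomain e b := by
  ext u; simp [equivMapDomain_apply]

lemma eqMD_symm_cancel (e : S ≃ S) (x : S →₀ ℕ) :
    equivMapDomain e (equivMapDomain e.symm x) = x := by
  rw [← equivMapDomain_trans, Equiv.symm_trans_self, equivMapDomain_refl]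

lemma eqMD_cancel {e : S ≃ S} {a b : S →₀ ℕ}
    (h : equivMapDomain e a = equivMapDomain e b) : a = b := by
  have := congrArg (equivMapDomain e.symm) h
  rwa [← equivMapDomain_trans, ← equivMapDomain_trans, Equiv.self_trans_symm,
    equivMapDomain_refl, equivMapDomain_refl] at this

lemma phiWord_cons (s : S) (w : FreeMonoid S) (x : S →₀ ℕ) :
    phiWord op hlb (FreeMonoid.of s * w) x
      = Finsupp.single s 1 + equivMapDomain (sig op hlb s) (phiWord op hlb w x) := by
  rw [map_mul]; rfl

lemma word_apply (w : FreeMonoid S) (x : S →₀ ℕ) :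
    phiWord op hlb w x
      = phiWord op hlb w 0
        + equivMapDomain (FreeMonoid.lift (sig op hlb) w : S ≃ S) x := by
  induction w using FreeMonoid.inductionOn' with
  | one =>
    rw [map_one, map_one]
    show x = (1 : Function.End (S →₀ ℕ)) 0 + equivMapDomain (Equiv.refl S) x
    show x = (0 : S →₀ ℕ) + equivMapDomain (Equiv.refl S) x
    rw [equivMapDomain_refl, zero_add]
  | of_mul s w ih =>
    rw [phiWord_cons, phiWord_cons, ih, eqMD_add, ← add_assoc, ← equivMapDomain_trans]
    congr 1
    have hlift : FreeMonoid.lift (sig op hlb) (FreeMonoid.of s * w)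
        = sig op hlb s * FreeMonoid.lift (sig op hlb) w := by
      rw [map_mul, FreeMonoid.lift_eval_of]
    rw [hlift]
    rfl

lemma ev_mk (w : FreeMonoid S) :
    ev op hlb hRC ((conGen (rcRel op)).mk' w) = phiWord op hlb w 0 := by
  show Phi op hlb hRC _ 0 = _
  rw [Phi_mk]

lemma Phi_apply (m : StructureMonoid op) (x : S →₀ ℕ) :
    Phi op hlb hRC m x
      = ev op hlb hRC m + equivMapDomain (rho op hlb hRC m : S ≃ S) x := by
  induction m using Con.induction_on with
  | H w =>
    show Phi op hlb hRC ((conGen (rcRel op)).mk' w) x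
      = ev op hlb hRC ((conGen (rcRel op)).mk' w)
        + equivMapDomain (rho op hlb hRC ((conGen (rcRel op)).mk' w) : S ≃ S) x
    rw [Phi_mk, rho_mk, ev_mk]
    exact word_apply op hlb w x

lemma ev_mul (m n : StructureMonoid op) :
    ev op hlb hRC (m * n)
      = ev op hlb hRC m + equivMapDomain (rho op hlb hRC m : S ≃ S) (ev op hlb hRC n) := by
  show Phi op hlb hRC (m * n) 0 = _
  rw [map_mul]
  show Phi op hlb hRC m (Phi op hlb hRC n 0) = _
  rw [Phi_apply]
  rfl

lemma ev_cons (s : S) (w : FreeMonoid S) :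
    ev op hlb hRC ((conGen (rcRel op)).mk' (FreeMonoid.of s * w))
      = Finsupp.single s 1
        + equivMapDomain (sig op hlb s) (ev op hlb hRC ((conGen (rcRel op)).mk' w)) := by
  have h1 : ((conGen (rcRel op)).mk' (FreeMonoid.of s * w) : StructureMonoid op)
      = smGen op s * (conGen (rcRel op)).mk' w := map_mul _ _ _
  rw [h1, ev_mul, ev_smGen, rho_smGen]

lemma gen_rel' {s t : S} (h : s ≠ t) :
    smGen op s * smGen op (op s t) = smGen op t * smGen op (op t s) := by
  have h1 : ∀ a b : S, smGen op a * smGen op b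
      = (conGen (rcRel op)).mk' (FreeMonoid.of a * FreeMonoid.of b) :=
    fun a b => (map_mul _ _ _).symm
  rw [h1, h1]
  exact (Con.eq _).2 (ConGen.Rel.of _ _ ⟨s, t, h, rfl, rfl⟩)

/-- Key extraction lemma: if the cocycle of `m` has positive coordinate at `t`, then
`t` left-divides `m`. -/
lemma extract (w : FreeMonoid S) :
    ∀ t : S, 1 ≤ ev op hlb hRC ((conGen (rcRel op)).mk' w) t →
      ∃ m, (conGen (rcRel op)).mk' w = smGen op t * m := by
  induction w using FreeMonoid.inductionOn' with
  | one =>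
    intro t ht
    rw [map_one, ev_one] at ht
    exact absurd ht (by simp)
  | of_mul s w ih =>
    intro t ht
    by_cases hts : t = s
    · subst hts
      exact ⟨(conGen (rcRel op)).mk' w, map_mul _ _ _⟩
    · rw [ev_cons] at ht
      have hst : s ≠ t := fun h => hts h.symm
      rw [Finsupp.add_apply, Finsupp.single_eq_of_ne hts, zero_add, equivMapDomain_apply,
        sig_symm_apply] at ht
      obtain ⟨m, hm⟩ := ih (op s t) ht
      refine ⟨smGen op (op t s) * m, ?_⟩
      have h1 : ((conGen (rcRel op)).mk' (FreeMonoid.of s * w) : StructureMonoid op)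
          = smGen op s * (conGen (rcRel op)).mk' w := map_mul _ _ _
      rw [h1, hm, ← mul_assoc, gen_rel' op hst, mul_assoc]

lemma ev_eq_zero {m : StructureMonoid op} (h : ev op hlb hRC m = 0) : m = 1 := by
  obtain ⟨w, rfl⟩ := Con.mk'_surjective m
  induction w using FreeMonoid.inductionOn' with
  | one => rw [map_one]
  | of_mul s w ih =>
    rw [ev_cons] at h
    have h2 : ((Finsupp.single s 1 : S →₀ ℕ) + equivMapDomain (sig op hlb s)
        (ev op hlb hRC ((conGen (rcRel op)).mk' w))) s = (0 : ℕ) := by rw [h]; rfl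
    rw [Finsupp.add_apply, Finsupp.single_eq_same] at h2
    omega

lemma ev_inj_aux : ∀ (n : ℕ) (w v : FreeMonoid S), w.length ≤ n →
    ev op hlb hRC ((conGen (rcRel op)).mk' w) = ev op hlb hRC ((conGen (rcRel op)).mk' v) →
    (conGen (rcRel op)).mk' w = (conGen (rcRel op)).mk' v := by
  intro n
  induction n with
  | zero =>
    intro w v hw h
    have hw1 : w = 1 := FreeMonoid.length_eq_zero.1 (Nat.le_zero.1 hw)
    subst hw1
    rw [map_one] at h ⊢
    rw [ev_one] at h
    exact (ev_eq_zero op hlb hRC h.symm).symm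
  | succ n ihn =>
    intro w v hw h
    cases w using FreeMonoid.casesOn with
    | one =>
      rw [map_one] at h ⊢
      rw [ev_one] at h
      exact (ev_eq_zero op hlb hRC h.symm).symm
    | of_mul s w =>
      have hpos : 1 ≤ ev op hlb hRC ((conGen (rcRel op)).mk' v) s := by
        rw [← h, ev_cons, Finsupp.add_apply, Finsupp.single_eq_same]
        exact Nat.le_add_right _ _
      obtain ⟨m, hm⟩ := extract op hlb hRC v s hpos
      obtain ⟨u, rfl⟩ := Con.mk'_surjective m
      have hsu : (smGen op s : StructureMonoid op) * (conGen (rcRel op)).mk' u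
          = (conGen (rcRel op)).mk' (FreeMonoid.of s * u) := (map_mul _ _ _).symm
      rw [hm, hsu, ev_cons, ev_cons] at h
      have h3 := eqMD_cancel (add_left_cancel h)
      have hlen : w.length ≤ n := by
        rw [FreeMonoid.length_mul, FreeMonoid.length_of] at hw
        omega
      have hwu := ihn w u hlen h3
      have hws : ((conGen (rcRel op)).mk' (FreeMonoid.of s * w) : StructureMonoid op)
          = smGen op s * (conGen (rcRel op)).mk' w := map_mul _ _ _
      rw [hws, hwu, hm, hsu]

lemma ev_injective : Function.Injective (ev op hlb hRC) := by
  intro a b h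
  obtain ⟨w, rfl⟩ := Con.mk'_surjective a
  obtain ⟨v, rfl⟩ := Con.mk'_surjective b
  exact ev_inj_aux op hlb hRC w.length w v le_rfl h

lemma ev_surj_aux : ∀ (n : ℕ) (c : S →₀ ℕ), (c.sum fun _ k => k) ≤ n →
    ∃ m, ev op hlb hRC m = c := by
  intro n
  induction n with
  | zero =>
    intro c hc
    have : c = 0 := by
      ext a
      show c a = 0
      by_contra ha
      have h1 : a ∈ c.support := Finsupp.mem_support_iff.2 ha
      have h2 : c a ≤ c.sum fun _ k => k := Finset.single_le_sum (fun _ _ => Nat.zero_le _) h1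
      omega
    exact ⟨1, by rw [ev_one, this]⟩
  | succ n ih =>
    intro c hc
    by_cases h0 : c = 0
    · exact ⟨1, by rw [ev_one, h0]⟩
    · obtain ⟨s, hs⟩ : ∃ s, c s ≠ 0 := by
        by_contra hall
        push_neg at hall
        exact h0 (Finsupp.ext fun a => hall a)
      have hle : Finsupp.single s 1 ≤ c := Finsupp.single_le_iff.2 (Nat.one_le_iff_ne_zero.2 hs)
      have hdecomp : Finsupp.single s 1 + (c - Finsupp.single s 1) = c :=
        add_tsub_cancel_of_le hle
      set d : S →₀ ℕ := c - Finsupp.single s 1 with hd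
      have hsum : (d.sum fun _ k => k) ≤ n := by
        have hadd : (c.sum fun _ k => k)
            = ((Finsupp.single s 1).sum fun _ k => k) + (d.sum fun _ k => k) := by
          rw [← hdecomp]
          exact Finsupp.sum_add_index' (fun _ => rfl) (fun _ _ _ => rfl)
        rw [Finsupp.sum_single_index rfl] at hadd
        omega
      have hsum' : ((equivMapDomain (sig op hlb s).symm d).sum fun _ k => k) ≤ n := by
        rw [Finsupp.sum_equivMapDomain]
        exact hsum
      obtain ⟨m, hm⟩ := ih (equivMapDomain (sig op hlb s).symm d) hsum'
      refine ⟨smGen op s * m, ?_⟩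
      rw [ev_mul, ev_smGen, rho_smGen, hm, eqMD_symm_cancel, hdecomp]

lemma dvd_iff (m m' : StructureMonoid op) :
    m ∣ m' ↔ ev op hlb hRC m ≤ ev op hlb hRC m' := by
  constructor
  · rintro ⟨k, rfl⟩
    rw [ev_mul]
    exact self_le_add_right _ _
  · intro h
    set d : S →₀ ℕ := ev op hlb hRC m' - ev op hlb hRC m with hd
    have hdecomp : ev op hlb hRC m + d = ev op hlb hRC m' := add_tsub_cancel_of_le h
    obtain ⟨k, hk⟩ := ev_surj_aux op hlb hRC
      ((equivMapDomain (rho op hlb hRC m : S ≃ S).symm d).sum fun _ k => k)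
      (equivMapDomain (rho op hlb hRC m : S ≃ S).symm d) le_rfl
    refine ⟨k, (ev_injective op hlb hRC ?_).symm⟩
    rw [ev_mul, hk, eqMD_symm_cancel, hdecomp]

include hlb hRC in
lemma dvd_antisymm {a b : StructureMonoid op} (h1 : a ∣ b) (h2 : b ∣ a) : a = b :=
  ev_injective op hlb hRC (le_antisymm ((dvd_iff op hlb hRC a b).1 h1)
    ((dvd_iff op hlb hRC b a).1 h2))

end Defs

end RCProof

/-- The structure monoid `M` of an RC-quasigroup admits a length function, is
left-cancellative, any two elements admit a unique right-lcm and a unique left-gcd for the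
left-divisibility relation, and for `s ≠ t` the right-lcm of `s` and `t` is `s·(s∘t)`. -/
theorem statement7 {S : Type*} (op : S → S → S)
    (hRC : RCLaw op) (hlb : ∀ s : S, Function.Bijective (op s)) :
    (∃ lam : StructureMonoid op → ℕ,
      (∀ a b : StructureMonoid op, lam (a * b) = lam a + lam b) ∧
      (∀ g : StructureMonoid op, g ≠ 1 → 1 ≤ lam g) ∧
      (∀ s : S, lam (smGen op s) = 1)) ∧
    (∀ a b c : StructureMonoid op, a * b = a * c → b = c) ∧
    (∀ f g : StructureMonoid op,
      ∃! h : StructureMonoid op, (f ∣ h ∧ g ∣ h) ∧ ∀ k, f ∣ k → g ∣ k → h ∣ k) ∧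
    (∀ f g : StructureMonoid op,
      ∃! e : StructureMonoid op, (e ∣ f ∧ e ∣ g) ∧ ∀ c, c ∣ f → c ∣ g → c ∣ e) ∧
    (∀ s t : S, s ≠ t →
      (smGen op s ∣ smGen op s * smGen op (op s t)) ∧
      (smGen op t ∣ smGen op s * smGen op (op s t)) ∧
      (∀ k, smGen op s ∣ k → smGen op t ∣ k → smGen op s * smGen op (op s t) ∣ k)) := by
  classical
  open RCProof Finsupp in
  refine ⟨?_, ?_, ?_, ?_, ?_⟩
  · -- length function
    refine ⟨fun m => (ev op hlb hRC m).sum fun _ k => k, ?_, ?_, ?_⟩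
    · intro a b
      dsimp only
      rw [ev_mul]
      rw [Finsupp.sum_add_index' (fun _ => rfl) (fun _ _ _ => rfl),
        Finsupp.sum_equivMapDomain]
    · intro g hg
      dsimp only
      rw [Nat.one_le_iff_ne_zero]
      intro h0
      apply hg
      apply ev_eq_zero op hlb hRC
      ext a
      show ev op hlb hRC g a = 0
      by_contra ha
      have h1 : a ∈ (ev op hlb hRC g).support := Finsupp.mem_support_iff.2 ha
      have h2 : ev op hlb hRC g a ≤ (ev op hlb hRC g).sum fun _ k => k :=
        Finset.single_le_sum (fun _ _ => Nat.zero_le _) h1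
      omega
    · intro s
      dsimp only
      rw [ev_smGen, Finsupp.sum_single_index rfl]
  · -- left cancellative
    intro a b c h
    have := congrArg (ev op hlb hRC) h
    rw [ev_mul, ev_mul] at this
    exact ev_injective op hlb hRC (eqMD_cancel (add_left_cancel this))
  · -- lcm
    intro f g
    obtain ⟨h, hh⟩ := ev_surj_aux op hlb hRC
      ((ev op hlb hRC f ⊔ ev op hlb hRC g).sum fun _ k => k)
      (ev op hlb hRC f ⊔ ev op hlb hRC g) le_rfl
    have hprop : (f ∣ h ∧ g ∣ h) ∧ ∀ k, f ∣ k → g ∣ k → h ∣ k := by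
      refine ⟨⟨(dvd_iff op hlb hRC f h).2 (by rw [hh]; exact le_sup_left),
        (dvd_iff op hlb hRC g h).2 (by rw [hh]; exact le_sup_right)⟩, ?_⟩
      intro k hf hg
      exact (dvd_iff op hlb hRC h k).2 (by
        rw [hh]
        exact sup_le ((dvd_iff op hlb hRC f k).1 hf) ((dvd_iff op hlb hRC g k).1 hg))
    refine ⟨h, hprop, ?_⟩
    intro y hy
    exact dvd_antisymm op hlb hRC (hy.2 h hprop.1.1 hprop.1.2)
      (hprop.2 y hy.1.1 hy.1.2)
  · -- gcd
    intro f g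
    obtain ⟨e, he⟩ := ev_surj_aux op hlb hRC
      ((ev op hlb hRC f ⊓ ev op hlb hRC g).sum fun _ k => k)
      (ev op hlb hRC f ⊓ ev op hlb hRC g) le_rfl
    have hprop : (e ∣ f ∧ e ∣ g) ∧ ∀ c, c ∣ f → c ∣ g → c ∣ e := by
      refine ⟨⟨(dvd_iff op hlb hRC e f).2 (by rw [he]; exact inf_le_left),
        (dvd_iff op hlb hRC e g).2 (by rw [he]; exact inf_le_right)⟩, ?_⟩
      intro c hf hg
      exact (dvd_iff op hlb hRC c e).2 (by
        rw [he]
        exact le_inf ((dvd_iff op hlb hRC c f).1 hf) ((dvd_iff op hlb hRC c g).1 hg))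
    refine ⟨e, hprop, ?_⟩
    intro y hy
    exact dvd_antisymm op hlb hRC (hprop.2 y hy.1.1 hy.1.2)
      (hy.2 e hprop.1.1 hprop.1.2)
  · -- lcm of two generators
    intro s t hst
    refine ⟨⟨smGen op (op s t), rfl⟩, ⟨smGen op (op t s), gen_rel' op hst⟩, ?_⟩
    intro k hsk htk
    have hev : ev op hlb hRC (smGen op s * smGen op (op s t))
        = Finsupp.single s 1 + Finsupp.single t 1 := by
      rw [ev_mul, ev_smGen, ev_smGen, rho_smGen, equivMapDomain_single, sig_op]
    rw [dvd_iff op hlb hRC, hev]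
    have h1 : Finsupp.single s 1 ≤ ev op hlb hRC k := by
      rw [← ev_smGen op hlb hRC s, ← dvd_iff op hlb hRC]; exact hsk
    have h2 : Finsupp.single t 1 ≤ ev op hlb hRC k := by
      rw [← ev_smGen op hlb hRC t, ← dvd_iff op hlb hRC]; exact htk
    intro u
    rw [Finsupp.add_apply]
    by_cases hus : u = s
    · subst hus
      rw [Finsupp.single_eq_same, Finsupp.single_eq_of_ne hst, add_zero]
      simpa using h1 u
    · rw [Finsupp.single_eq_of_ne hus, zero_add]
      by_cases hut : u = t
      · subst hut
        rw [Finsupp.single_eq_same]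
        simpa using h2 u
      · rw [Finsupp.single_eq_of_ne hut]
        exact Nat.zero_le _
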